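/- If A_{-{1}} > 0, A_{-{n}} > 0, and A_{-{1,n}} < A_{-{n}} (cancellation), then A_{-{1}} < A_{-{n}}; consequently, since A_{-{i}} ≤ 0 for all 2 ≤ i ≤ n−1 under the label generation with p > −1, sample n is the most influential single sample, i.e., A_{-{n}} ≥ A_{-{i}} for all 1 ≤ i ≤ n. -/

import Mathlib

open Matrix Finset

noncomputable section

/-- The Gram matrix `X₋ₛᵀ X₋ₛ` of the rows of `X` outside `S`. -/
def gramOut {n d : ℕ} (X : Matrix (Fin n) (Fin d) ℝ) (S : Finset (Fin n)) :
    Matrix (Fin d) (Fin d) ℝ :=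
  ∑ i ∈ Sᶜ, vecMulVec (X i) (X i)

/-- The leave-`S`-out OLS estimator `θ̂₋ₛ = (X₋ₛᵀX₋ₛ)⁻¹ X₋ₛᵀ y₋ₛ`. -/
def olsOut {n d : ℕ} (X : Matrix (Fin n) (Fin d) ℝ) (y : Fin n → ℝ)
    (S : Finset (Fin n)) : Fin d → ℝ :=
  (gramOut X S)⁻¹ *ᵥ (∑ i ∈ Sᶜ, y i • X i)

/-- The full OLS estimator `θ̂ = (XᵀX)⁻¹ Xᵀ y`. -/
def ols {n d : ℕ} (X : Matrix (Fin n) (Fin d) ℝ) (y : Fin n → ℝ) : Fin d → ℝ :=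
  olsOut X y ∅

/-- The actual effect `A₋ₛ = x_testᵀ (θ̂₋ₛ - θ̂)` of removing the samples in `S`. -/
def effect {n d : ℕ} (X : Matrix (Fin n) (Fin d) ℝ) (y : Fin n → ℝ)
    (xt : Fin d → ℝ) (S : Finset (Fin n)) : ℝ :=
  xt ⬝ᵥ (olsOut X y S - ols X y)

/-- The (cross-)leverage score `hᵢⱼ = xᵢᵀ N⁻¹ xⱼ` with `N = XᵀX`. -/
def lev {n d : ℕ} (X : Matrix (Fin n) (Fin d) ℝ) (i j : Fin n) : ℝ :=
  X i ⬝ᵥ ((Xᵀ * X)⁻¹ *ᵥ X j)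

/-- The negative residual `rᵢ = xᵢᵀ θ̂ - yᵢ`. -/
def resid {n d : ℕ} (X : Matrix (Fin n) (Fin d) ℝ) (y : Fin n → ℝ) (i : Fin n) : ℝ :=
  X i ⬝ᵥ ols X y - y i

/-- The generated labels `y = Xθ* - e`, `e = (ε,0,…,0,pε)ᵀ` (with the index `i₁`
playing the role of sample 1 and `iₙ` that of sample n). -/
def ygen {n d : ℕ} (X : Matrix (Fin n) (Fin d) ℝ) (θstar : Fin d → ℝ) (ε p : ℝ)
    (i₁ iₙ : Fin n) : Fin n → ℝ :=
  fun i => X i ⬝ᵥ θstar - (if i = i₁ then ε else if i = iₙ then p * ε else 0)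

/-- The test point `x_test = (x₁ + p xₙ)/(p+1)`. -/
def xtest {n d : ℕ} (X : Matrix (Fin n) (Fin d) ℝ) (p : ℝ) (i₁ iₙ : Fin n) :
    Fin d → ℝ :=
  fun j => (X i₁ j + p * X iₙ j) / (p + 1)


set_option maxHeartbeats 2000000 in
lemma keypoly (a b h p : ℝ) (ha : 0 < a) (hb : 0 < b)
    (hD : 0 < a*b - h^2)
    (h1 : 0 < (a - p*h) * (1 - (a - p*h)))
    (h2 : 0 < (p*b - h) * (p - (p*b - h)))
    (h3 : b + p*h - (a*b - h^2) < 0) :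
    b * ((a - p*h) * (1 - (a - p*h))) < a * ((p*b - h) * (p - (p*b - h))) := by
  have hp0 : p ≠ 0 := by
    rintro rfl
    nlinarith [sq_nonneg h]
  have hp2 : 0 < p^2 := by positivity
  have hpv : 0 < p * (p*b - h) := by nlinarith [sq_nonneg (p*b - h)]
  have hppv : 0 < p^2*(1-b) + p*h := by nlinarith [mul_pos hp2 h2]
  have hu1 : a - p*h < 1 := by nlinarith [sq_nonneg (a - p*h)]
  have hcs : h^2 < (1-a)*(1-b) := by nlinarith
  have hHn : 0 < 1 - b := by
    by_contra hc
    push_neg at hc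
    have hs : 0 < p*h := by nlinarith
    nlinarith [mul_pos hs hppv, mul_pos hs hs]
  have hH1 : 0 < 1 - a := by nlinarith [sq_nonneg h]
  have hT : 0 < -(p*h) - (b*(1-a) + h^2) := by nlinarith
  have hApos : 0 < a*(1-b) + h^2 := by positivity
  have hprod : 0 < (-(p*h)) * (p^2*(a*(1-b)+h^2) + p*h) := by
    nlinarith [mul_pos hp2 (mul_pos hT hApos),
      mul_pos hp2 (mul_pos hD (sub_pos.mpr hcs))]
  have hG : 0 < p^2*(a*(1-b)+h^2) + p*h := by
    rcases mul_pos_iff.mp hprod with ⟨h4, h5⟩ | ⟨h4, h5⟩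
    · exact h5
    · nlinarith
  nlinarith [mul_pos ha hT, mul_pos hb hG]

set_option maxHeartbeats 2000000 in
lemma keyscalar (ε p H1 Hn Hc : ℝ) (hε : 0 < ε) (hp : -1 < p)
    (h11 : H1 < 1) (hnn : Hn < 1)
    (hD : 0 < (1-H1)*(1-Hn) - Hc^2)
    (hA1 : 0 < ((ε - ε*H1 - p*ε*Hc)/(1-H1)) * ((H1 + p*Hc)/(p+1)))
    (hAn : 0 < ((p*ε - ε*Hc - p*ε*Hn)/(1-Hn)) * ((Hc + p*Hn)/(p+1)))
    (hcanc : (((1-Hn)*(ε - ε*H1 - p*ε*Hc) + Hc*(p*ε - ε*Hc - p*ε*Hn))/((1-H1)*(1-Hn) - Hc^2)) * ((H1 + p*Hc)/(p+1))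
      + ((Hc*(ε - ε*H1 - p*ε*Hc) + (1-H1)*(p*ε - ε*Hc - p*ε*Hn))/((1-H1)*(1-Hn) - Hc^2)) * ((Hc + p*Hn)/(p+1))
      < ((p*ε - ε*Hc - p*ε*Hn)/(1-Hn)) * ((Hc + p*Hn)/(p+1))) :
    ((ε - ε*H1 - p*ε*Hc)/(1-H1)) * ((H1 + p*Hc)/(p+1))
      < ((p*ε - ε*Hc - p*ε*Hn)/(1-Hn)) * ((Hc + p*Hn)/(p+1)) := by
  set a := 1 - H1 with hadef
  set b := 1 - Hn with hbdef
  have ha : 0 < a := by linarith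
  have hb : 0 < b := by linarith
  have hP : 0 < p + 1 := by linarith
  have hDab : 0 < a*b - Hc^2 := by rw [hadef, hbdef]; exact hD
  set u := a - p*Hc with hudef
  set v := p*b - Hc with hvdef
  have eA1 : ((ε - ε*H1 - p*ε*Hc)/(1-H1)) * ((H1 + p*Hc)/(p+1))
      = (ε*(u*(1-u)))/(a*(p+1)) := by
    rw [hudef, hadef]; field_simp; ring
  have eAn : ((p*ε - ε*Hc - p*ε*Hn)/(1-Hn)) * ((Hc + p*Hn)/(p+1))
      = (ε*(v*(p-v)))/(b*(p+1)) := by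
    rw [hvdef, hbdef]; field_simp; ring
  have h1 : 0 < u*(1-u) := by
    rw [eA1] at hA1
    have h := (div_pos_iff.mp hA1)
    rcases h with ⟨h1, h2⟩ | ⟨h1, h2⟩
    · nlinarith
    · nlinarith [mul_pos ha hP]
  have h2 : 0 < v*(p-v) := by
    rw [eAn] at hAn
    have h := (div_pos_iff.mp hAn)
    rcases h with ⟨h1', h2'⟩ | ⟨h1', h2'⟩
    · nlinarith
    · nlinarith [mul_pos hb hP]
  have h3 : b + p*Hc - (a*b - Hc^2) < 0 := by
    have ecanc : (((1-Hn)*(ε - ε*H1 - p*ε*Hc) + Hc*(p*ε - ε*Hc - p*ε*Hn))/((1-H1)*(1-Hn) - Hc^2)) * ((H1 + p*Hc)/(p+1))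
      + ((Hc*(ε - ε*H1 - p*ε*Hc) + (1-H1)*(p*ε - ε*Hc - p*ε*Hn))/((1-H1)*(1-Hn) - Hc^2)) * ((Hc + p*Hn)/(p+1))
      - ((p*ε - ε*Hc - p*ε*Hn)/(1-Hn)) * ((Hc + p*Hn)/(p+1))
      = (ε*(b + p*Hc - (a*b - Hc^2)))/((p+1)*b) := by
      rw [hadef, hbdef]
      have hne1 : (1:ℝ) - H1 ≠ 0 := (by linarith : (0:ℝ) < 1 - H1).ne'
      have hne2 : (1:ℝ) - Hn ≠ 0 := (by linarith : (0:ℝ) < 1 - Hn).ne'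
      have hne3 : (1 - H1) * (1 - Hn) - Hc^2 ≠ 0 := hD.ne'
      have hne4 : p + 1 ≠ 0 := hP.ne'
      rw [div_mul_div_comm, div_mul_div_comm, div_mul_div_comm,
        div_add_div _ _ (mul_ne_zero hne3 hne4) (mul_ne_zero hne3 hne4),
        div_sub_div _ _ (mul_ne_zero (mul_ne_zero hne3 hne4) (mul_ne_zero hne3 hne4))
          (mul_ne_zero hne2 hne4),
        div_eq_div_iff (mul_ne_zero (mul_ne_zero (mul_ne_zero hne3 hne4) (mul_ne_zero hne3 hne4))
          (mul_ne_zero hne2 hne4)) (mul_ne_zero hne4 hne2)]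
      ring
    have hlt : (ε*(b + p*Hc - (a*b - Hc^2)))/((p+1)*b) < 0 := by
      rw [← ecanc]; linarith
    have hPb : 0 < (p+1)*b := mul_pos hP hb
    rcases div_neg_iff.mp hlt with ⟨h1', h2'⟩ | ⟨h1', h2'⟩
    · linarith
    · nlinarith
  have key := keypoly a b Hc p ha hb hDab
    (by rw [hudef] at h1; exact h1) (by rw [hvdef] at h2; exact h2) h3
  rw [eA1, eAn, div_lt_div_iff₀ (by positivity) (by positivity)]
  rw [hudef, hvdef]
  nlinarith [mul_pos (mul_pos hε hP) (sub_pos.mpr key)]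

lemma vmv_mulVec {d : ℕ} (u v w : Fin d → ℝ) :
    vecMulVec u v *ᵥ w = (v ⬝ᵥ w) • u := by
  ext j
  simp [vecMulVec_apply, mulVec, dotProduct, Finset.mul_sum, mul_comm, mul_left_comm]

lemma sum_mulVec' {n d : ℕ} (M : Fin n → Matrix (Fin d) (Fin d) ℝ) (s : Finset (Fin n))
    (x : Fin d → ℝ) : (∑ i ∈ s, M i) *ᵥ x = ∑ i ∈ s, (M i *ᵥ x) := by
  ext j
  simp only [mulVec, dotProduct, Matrix.sum_apply, Finset.sum_apply, Finset.sum_mul]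
  rw [Finset.sum_comm]

lemma dot_sum' {n d : ℕ} (x : Fin d → ℝ) (f : Fin n → (Fin d → ℝ)) (s : Finset (Fin n)) :
    x ⬝ᵥ (∑ i ∈ s, f i) = ∑ i ∈ s, x ⬝ᵥ f i := by
  simp only [dotProduct, Finset.sum_apply, Finset.mul_sum]
  rw [Finset.sum_comm]

lemma psd_sum_vmv {n d : ℕ} (f : Fin n → (Fin d → ℝ)) (s : Finset (Fin n)) :
    (∑ i ∈ s, vecMulVec (f i) (f i)).PosSemidef := by
  rw [posSemidef_iff_dotProduct_mulVec]
  constructor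
  · unfold Matrix.IsHermitian
    ext j k
    simp only [conjTranspose_apply, Matrix.sum_apply, vecMulVec_apply, star_trivial]
    exact Finset.sum_congr rfl fun i _ => mul_comm _ _
  · intro x
    have h1 : (∑ i ∈ s, vecMulVec (f i) (f i)) *ᵥ x = ∑ i ∈ s, (f i ⬝ᵥ x) • f i := by
      rw [sum_mulVec']
      exact Finset.sum_congr rfl fun i _ => vmv_mulVec _ _ _
    rw [h1, star_trivial, dot_sum']
    refine Finset.sum_nonneg fun i _ => ?_
    rw [dotProduct_smul, smul_eq_mul, dotProduct_comm]
    exact mul_self_nonneg _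

lemma psd_det_pos {d : ℕ} {A : Matrix (Fin d) (Fin d) ℝ} (hA : A.PosSemidef)
    (h : IsUnit A.det) : 0 < A.det := by
  have h0 : A.det ≠ 0 := h.ne_zero
  have he := hA.isHermitian.det_eq_prod_eigenvalues
  have hnn : 0 ≤ ∏ i, hA.isHermitian.eigenvalues i :=
    Finset.prod_nonneg fun i _ => hA.eigenvalues_nonneg i
  rw [he] at h0 ⊢
  exact lt_of_le_of_ne hnn (Ne.symm h0)

lemma det_sub_vmv {d : ℕ} {A : Matrix (Fin d) (Fin d) ℝ} (hA : IsUnit A.det)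
    (u : Fin d → ℝ) :
    (A - vecMulVec u u).det = A.det * (1 - u ⬝ᵥ A⁻¹ *ᵥ u) := by
  have h1 : A - vecMulVec u u
      = A * (1 - (A⁻¹ * replicateCol (Fin 1) u) * replicateRow (Fin 1) u) := by
    rw [Matrix.mul_sub, Matrix.mul_one, ← Matrix.mul_assoc, ← Matrix.mul_assoc,
      Matrix.mul_nonsing_inv A hA, Matrix.one_mul, vecMulVec_eq (Fin 1)]
    rfl
  rw [h1, Matrix.det_mul, Matrix.det_one_sub_mul_comm]
  congr 1
  rw [← replicateCol_mulVec, Matrix.det_fin_one]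
  simp [Matrix.mulVec_neg, sub_eq_add_neg]

lemma gram_full {n d : ℕ} (X : Matrix (Fin n) (Fin d) ℝ) :
    (∑ i : Fin n, vecMulVec (X i) (X i)) = Xᵀ * X := by
  ext j k
  simp only [Matrix.sum_apply, vecMulVec_apply, Matrix.mul_apply, transpose_apply]

lemma gramOut_eq {n d : ℕ} (X : Matrix (Fin n) (Fin d) ℝ) (S : Finset (Fin n)) :
    gramOut X S = Xᵀ * X - ∑ i ∈ S, vecMulVec (X i) (X i) := by
  rw [gramOut, ← gram_full X, eq_sub_iff_add_eq]
  exact Finset.sum_compl_add_sum S _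

lemma gramOut_empty {n d : ℕ} (X : Matrix (Fin n) (Fin d) ℝ) :
    gramOut X ∅ = Xᵀ * X := by
  rw [gramOut_eq]; simp

lemma olsOut_eq_of {n d : ℕ} (X : Matrix (Fin n) (Fin d) ℝ) (y : Fin n → ℝ)
    (S : Finset (Fin n)) (θc : Fin d → ℝ) (hS : IsUnit (gramOut X S).det)
    (h : gramOut X S *ᵥ θc = ∑ i ∈ Sᶜ, y i • X i) :
    olsOut X y S = θc := by
  rw [olsOut, ← h, Matrix.mulVec_mulVec, Matrix.nonsing_inv_mul _ hS, Matrix.one_mulVec]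

lemma N_mulVec_ols {n d : ℕ} (X : Matrix (Fin n) (Fin d) ℝ) (y : Fin n → ℝ)
    (hN : IsUnit (Xᵀ * X).det) :
    (Xᵀ * X) *ᵥ ols X y = ∑ i : Fin n, y i • X i := by
  rw [ols, olsOut, gramOut_empty, Matrix.mulVec_mulVec, Matrix.mul_nonsing_inv _ hN,
    Matrix.one_mulVec, Finset.compl_empty]

lemma N_inv_cancel {n d : ℕ} (X : Matrix (Fin n) (Fin d) ℝ) (u : Fin d → ℝ)
    (hN : IsUnit (Xᵀ * X).det) :
    (Xᵀ * X) *ᵥ ((Xᵀ * X)⁻¹ *ᵥ u) = u := by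
  rw [Matrix.mulVec_mulVec, Matrix.mul_nonsing_inv _ hN, Matrix.one_mulVec]

lemma lev_symm {n d : ℕ} (X : Matrix (Fin n) (Fin d) ℝ) (i j : Fin n) :
    lev X i j = lev X j i := by
  unfold lev
  rw [Matrix.dotProduct_mulVec, ← Matrix.mulVec_transpose, Matrix.transpose_nonsing_inv,
    Matrix.transpose_mul, Matrix.transpose_transpose, dotProduct_comm]

lemma sum_compl' {n : ℕ} {M : Type*} [AddCommGroup M] (S : Finset (Fin n)) (f : Fin n → M) :
    ∑ i ∈ Sᶜ, f i = (∑ i : Fin n, f i) - ∑ i ∈ S, f i :=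
  eq_sub_of_add_eq (Finset.sum_compl_add_sum S f)

lemma olsOut_single {n d : ℕ} (X : Matrix (Fin n) (Fin d) ℝ) (y : Fin n → ℝ) (i : Fin n)
    (hN : IsUnit (Xᵀ * X).det) (hout : IsUnit (gramOut X {i}).det)
    (hii : lev X i i ≠ 1) :
    olsOut X y {i} = ols X y
      + (resid X y i / (1 - lev X i i)) • ((Xᵀ * X)⁻¹ *ᵥ X i) := by
  apply olsOut_eq_of _ _ _ _ hout
  set c := resid X y i / (1 - lev X i i) with hcdef
  have hc : c * (1 - lev X i i) = resid X y i :=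
    div_mul_cancel₀ _ (sub_ne_zero.mpr (Ne.symm hii))
  set θc := ols X y + c • ((Xᵀ * X)⁻¹ *ᵥ X i) with hθc
  have hdot : X i ⬝ᵥ θc = X i ⬝ᵥ ols X y + c * lev X i i := by
    rw [hθc, dotProduct_add, dotProduct_smul, smul_eq_mul, lev]
  rw [gramOut_eq, Finset.sum_singleton, sum_compl' {i}, Finset.sum_singleton]
  rw [Matrix.sub_mulVec, vmv_mulVec, hdot, hθc]
  rw [Matrix.mulVec_add, Matrix.mulVec_smul, N_mulVec_ols X y hN, N_inv_cancel X _ hN]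
  have hs : c - (X i ⬝ᵥ ols X y + c * lev X i i) = - y i := by
    have : resid X y i = X i ⬝ᵥ ols X y - y i := rfl
    rw [this] at hc; linarith [hc]
  ext j
  simp only [Pi.add_apply, Pi.sub_apply, Pi.smul_apply, smul_eq_mul]
  linear_combination (X i j) * hs

lemma olsOut_pair {n d : ℕ} (X : Matrix (Fin n) (Fin d) ℝ) (y : Fin n → ℝ)
    (i₁ iₙ : Fin n) (hne : i₁ ≠ iₙ)
    (hN : IsUnit (Xᵀ * X).det) (hout : IsUnit (gramOut X {i₁, iₙ}).det)
    (hDne : (1 - lev X i₁ i₁) * (1 - lev X iₙ iₙ) - (lev X i₁ iₙ)^2 ≠ 0) :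
    olsOut X y {i₁, iₙ} = ols X y
      + (((1 - lev X iₙ iₙ) * resid X y i₁ + lev X i₁ iₙ * resid X y iₙ)
          / ((1 - lev X i₁ i₁) * (1 - lev X iₙ iₙ) - (lev X i₁ iₙ)^2))
        • ((Xᵀ * X)⁻¹ *ᵥ X i₁)
      + ((lev X i₁ iₙ * resid X y i₁ + (1 - lev X i₁ i₁) * resid X y iₙ)
          / ((1 - lev X i₁ i₁) * (1 - lev X iₙ iₙ) - (lev X i₁ iₙ)^2))
        • ((Xᵀ * X)⁻¹ *ᵥ X iₙ) := by
  have hsymm : lev X iₙ i₁ = lev X i₁ iₙ := lev_symm X iₙ i₁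
  apply olsOut_eq_of _ _ _ _ hout
  set H1 := lev X i₁ i₁
  set Hn := lev X iₙ iₙ
  set Hc := lev X i₁ iₙ
  set r1 := resid X y i₁ with hr1def
  set rn := resid X y iₙ with hrndef
  set c1 := ((1 - Hn) * r1 + Hc * rn) / ((1 - H1) * (1 - Hn) - Hc^2) with hc1def
  set cn := (Hc * r1 + (1 - H1) * rn) / ((1 - H1) * (1 - Hn) - Hc^2) with hcndef
  have hs1 : c1 * (1 - H1) - cn * Hc = r1 := by
    rw [hc1def, hcndef, div_mul_eq_mul_div, div_mul_eq_mul_div, ← sub_div, div_eq_iff hDne]; ring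
  have hs2 : cn * (1 - Hn) - c1 * Hc = rn := by
    rw [hc1def, hcndef, div_mul_eq_mul_div, div_mul_eq_mul_div, ← sub_div, div_eq_iff hDne]; ring
  set θc := ols X y + c1 • ((Xᵀ * X)⁻¹ *ᵥ X i₁) + cn • ((Xᵀ * X)⁻¹ *ᵥ X iₙ) with hθc
  have hdot1 : X i₁ ⬝ᵥ θc = X i₁ ⬝ᵥ ols X y + c1 * H1 + cn * Hc := by
    rw [hθc, dotProduct_add, dotProduct_add, dotProduct_smul, dotProduct_smul]
    simp only [smul_eq_mul]
    rfl
  have hdotn : X iₙ ⬝ᵥ θc = X iₙ ⬝ᵥ ols X y + c1 * Hc + cn * Hn := by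
    rw [hθc, dotProduct_add, dotProduct_add, dotProduct_smul, dotProduct_smul]
    simp only [smul_eq_mul]
    rw [show X iₙ ⬝ᵥ (Xᵀ * X)⁻¹ *ᵥ X i₁ = Hc from hsymm,
      show X iₙ ⬝ᵥ (Xᵀ * X)⁻¹ *ᵥ X iₙ = Hn from rfl]
  rw [gramOut_eq, Finset.sum_pair hne, sum_compl' {i₁, iₙ}, Finset.sum_pair hne]
  rw [Matrix.sub_mulVec, Matrix.add_mulVec, vmv_mulVec, vmv_mulVec, hdot1, hdotn, hθc]
  rw [Matrix.mulVec_add, Matrix.mulVec_add, Matrix.mulVec_smul, Matrix.mulVec_smul,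
    N_mulVec_ols X y hN, N_inv_cancel X _ hN, N_inv_cancel X _ hN]
  have he1 : c1 - (X i₁ ⬝ᵥ ols X y + c1 * H1 + cn * Hc) = - y i₁ := by
    have : r1 = X i₁ ⬝ᵥ ols X y - y i₁ := rfl
    rw [this] at hs1; linarith [hs1]
  have he2 : cn - (X iₙ ⬝ᵥ ols X y + c1 * Hc + cn * Hn) = - y iₙ := by
    have : rn = X iₙ ⬝ᵥ ols X y - y iₙ := rfl
    rw [this] at hs2; linarith [hs2]
  ext j
  simp only [Pi.add_apply, Pi.sub_apply, Pi.smul_apply, smul_eq_mul]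
  linear_combination (X i₁ j) * he1 + (X iₙ j) * he2

lemma sum_e {n d : ℕ} (X : Matrix (Fin n) (Fin d) ℝ) (ε p : ℝ) (i₁ iₙ : Fin n)
    (hne : i₁ ≠ iₙ) :
    ∑ i : Fin n, ((if i = i₁ then ε else if i = iₙ then p*ε else 0) • X i)
      = ε • X i₁ + (p*ε) • X iₙ := by
  have h : ∀ i : Fin n, ((if i = i₁ then ε else if i = iₙ then p*ε else 0) • X i)
      = ((if i = i₁ then ε • X i₁ else 0) + (if i = iₙ then (p*ε) • X iₙ else 0)) := by
    intro i
    by_cases h1 : i = i₁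
    · subst h1; rw [if_pos rfl, if_pos rfl, if_neg hne, add_zero]
    · by_cases h2 : i = iₙ
      · subst h2; rw [if_neg h1, if_neg h1, if_pos rfl, if_pos rfl, zero_add]
      · rw [if_neg h1, if_neg h2, if_neg h1, if_neg h2, zero_smul, add_zero]
  rw [Finset.sum_congr rfl (fun i _ => h i), Finset.sum_add_distrib]
  simp [Finset.sum_ite_eq']

lemma ols_ygen {n d : ℕ} (X : Matrix (Fin n) (Fin d) ℝ) (θstar : Fin d → ℝ) (ε p : ℝ)
    (i₁ iₙ : Fin n) (hne : i₁ ≠ iₙ) (hN : IsUnit (Xᵀ * X).det) :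
    ols X (ygen X θstar ε p i₁ iₙ)
      = θstar - ε • ((Xᵀ * X)⁻¹ *ᵥ X i₁) - (p*ε) • ((Xᵀ * X)⁻¹ *ᵥ X iₙ) := by
  apply olsOut_eq_of _ _ _ _ (by rwa [gramOut_empty])
  rw [gramOut_empty, Finset.compl_empty]
  rw [Matrix.mulVec_sub, Matrix.mulVec_sub, Matrix.mulVec_smul, Matrix.mulVec_smul,
    N_inv_cancel X _ hN, N_inv_cancel X _ hN]
  have hsum : ∑ i : Fin n, ygen X θstar ε p i₁ iₙ i • X i
      = (∑ i : Fin n, (X i ⬝ᵥ θstar) • X i)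
        - ∑ i : Fin n, ((if i = i₁ then ε else if i = iₙ then p*ε else 0) • X i) := by
    rw [← Finset.sum_sub_distrib]
    exact Finset.sum_congr rfl fun i _ => by rw [ygen, sub_smul]
  rw [hsum, sum_e X ε p i₁ iₙ hne]
  have hNθ : (∑ i : Fin n, (X i ⬝ᵥ θstar) • X i) = (Xᵀ * X) *ᵥ θstar := by
    rw [← gram_full, sum_mulVec']
    exact Finset.sum_congr rfl fun i _ => (vmv_mulVec _ _ _).symm
  rw [hNθ, sub_sub]

lemma resid_ygen {n d : ℕ} (X : Matrix (Fin n) (Fin d) ℝ) (θstar : Fin d → ℝ) (ε p : ℝ)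
    (i₁ iₙ : Fin n) (i : Fin n) (hne : i₁ ≠ iₙ) (hN : IsUnit (Xᵀ * X).det) :
    resid X (ygen X θstar ε p i₁ iₙ) i
      = (if i = i₁ then ε else if i = iₙ then p * ε else 0)
        - ε * lev X i₁ i - p * ε * lev X iₙ i := by
  rw [resid, ols_ygen X θstar ε p i₁ iₙ hne hN, ygen]
  rw [dotProduct_sub, dotProduct_sub, dotProduct_smul, dotProduct_smul]
  rw [show X i ⬝ᵥ ((Xᵀ * X)⁻¹ *ᵥ X i₁) = lev X i i₁ from rfl,
    show X i ⬝ᵥ ((Xᵀ * X)⁻¹ *ᵥ X iₙ) = lev X i iₙ from rfl,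
    lev_symm X i i₁, lev_symm X i iₙ]
  simp only [smul_eq_mul]
  ring

lemma xt_dot_lev {n d : ℕ} (X : Matrix (Fin n) (Fin d) ℝ) (p : ℝ) (i₁ iₙ i : Fin n) :
    xtest X p i₁ iₙ ⬝ᵥ ((Xᵀ * X)⁻¹ *ᵥ X i)
      = (lev X i₁ i + p * lev X iₙ i) / (p + 1) := by
  set w := (Xᵀ * X)⁻¹ *ᵥ X i with hw
  have h : ∀ j, xtest X p i₁ iₙ j * w j
      = (X i₁ j * w j + p * (X iₙ j * w j)) / (p+1) := by
    intro j; rw [xtest]; ring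
  rw [dotProduct]
  rw [Finset.sum_congr rfl (fun j _ => h j), ← Finset.sum_div, Finset.sum_add_distrib,
    ← Finset.mul_sum]
  rfl

lemma effect_single {n d : ℕ} (X : Matrix (Fin n) (Fin d) ℝ) (y : Fin n → ℝ)
    (xt : Fin d → ℝ) (i : Fin n)
    (hN : IsUnit (Xᵀ * X).det) (hout : IsUnit (gramOut X {i}).det)
    (hii : lev X i i ≠ 1) :
    effect X y xt {i}
      = (resid X y i / (1 - lev X i i)) * (xt ⬝ᵥ ((Xᵀ * X)⁻¹ *ᵥ X i)) := by
  rw [effect, olsOut_single X y i hN hout hii, add_sub_cancel_left, dotProduct_smul,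
    smul_eq_mul]

lemma effect_pair {n d : ℕ} (X : Matrix (Fin n) (Fin d) ℝ) (y : Fin n → ℝ)
    (xt : Fin d → ℝ) (i₁ iₙ : Fin n) (hne : i₁ ≠ iₙ)
    (hN : IsUnit (Xᵀ * X).det) (hout : IsUnit (gramOut X {i₁, iₙ}).det)
    (hDne : (1 - lev X i₁ i₁) * (1 - lev X iₙ iₙ) - (lev X i₁ iₙ)^2 ≠ 0) :
    effect X y xt {i₁, iₙ}
      = (((1 - lev X iₙ iₙ) * resid X y i₁ + lev X i₁ iₙ * resid X y iₙ)
          / ((1 - lev X i₁ i₁) * (1 - lev X iₙ iₙ) - (lev X i₁ iₙ)^2))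
        * (xt ⬝ᵥ ((Xᵀ * X)⁻¹ *ᵥ X i₁))
      + ((lev X i₁ iₙ * resid X y i₁ + (1 - lev X i₁ i₁) * resid X y iₙ)
          / ((1 - lev X i₁ i₁) * (1 - lev X iₙ iₙ) - (lev X i₁ iₙ)^2))
        * (xt ⬝ᵥ ((Xᵀ * X)⁻¹ *ᵥ X iₙ)) := by
  rw [effect, olsOut_pair X y i₁ iₙ hne hN hout hDne]
  have h : ∀ (o a b : Fin d → ℝ), o + a + b - o = a + b := by
    intro o a b; abel
  rw [h, dotProduct_add, dotProduct_smul, dotProduct_smul, smul_eq_mul, smul_eq_mul]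

lemma one_sub_lev_pos {n d : ℕ} (X : Matrix (Fin n) (Fin d) ℝ) (i : Fin n)
    (hN : IsUnit (Xᵀ * X).det) (hout : IsUnit (gramOut X {i}).det) :
    0 < 1 - lev X i i := by
  have hpsdN : (Xᵀ * X).PosSemidef := by rw [← gram_full]; exact psd_sum_vmv _ _
  have hpsdG : (gramOut X {i}).PosSemidef := psd_sum_vmv _ _
  have hdN : 0 < (Xᵀ * X).det := psd_det_pos hpsdN hN
  have hdG : 0 < (gramOut X {i}).det := psd_det_pos hpsdG hout
  have heq : (gramOut X {i}).det = (Xᵀ * X).det * (1 - lev X i i) := by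
    rw [gramOut_eq, Finset.sum_singleton, det_sub_vmv hN]
    rfl
  rw [heq] at hdG
  by_contra hc
  push_neg at hc
  nlinarith

/-- technical lemma of Appendix B.3: if `A₋{1} > 0`, `A₋{n} > 0`
and `A₋{1,n} < A₋{n}` (cancellation), then `A₋{1} < A₋{n}`; consequently, since
`A₋{i} ≤ 0` for all middle indices under the label generation with `p > -1`, sample
`n` is the most influential single sample: `A₋{n} ≥ A₋{i}` for all `i`. -/
theorem cancellation_implies_n_most_influential
    (n d : ℕ) (hn : 3 ≤ n) (hd : 0 < d)
    (X : Matrix (Fin n) (Fin d) ℝ) (θstar : Fin d → ℝ) (ε : ℝ) (hε : 0 < ε)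
    (p : ℝ) (hp : -1 < p)
    (i₁ iₙ : Fin n) (hi₁ : (i₁ : ℕ) = 0) (hiₙ : (iₙ : ℕ) = n - 1)
    (hone : ∀ i, X i ⟨0, hd⟩ = 1)
    (hN : IsUnit (Xᵀ * X).det)
    (hmid : IsUnit (∑ i ∈ ({i₁, iₙ} : Finset (Fin n))ᶜ, vecMulVec (X i) (X i)).det)
    (hout : ∀ i : Fin n, IsUnit (gramOut X {i}).det)
    (hout₁ₙ : IsUnit (gramOut X {i₁, iₙ}).det)
    (h11 : lev X i₁ i₁ < 1) (hnn : lev X iₙ iₙ < 1)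
    (hD : 0 < (1 - lev X i₁ i₁) * (1 - lev X iₙ iₙ) - (lev X i₁ iₙ) ^ 2)
    (hA₁ : 0 < effect X (ygen X θstar ε p i₁ iₙ) (xtest X p i₁ iₙ) {i₁})
    (hAₙ : 0 < effect X (ygen X θstar ε p i₁ iₙ) (xtest X p i₁ iₙ) {iₙ})
    (hcanc : effect X (ygen X θstar ε p i₁ iₙ) (xtest X p i₁ iₙ) {i₁, iₙ} <
      effect X (ygen X θstar ε p i₁ iₙ) (xtest X p i₁ iₙ) {iₙ}) :
    effect X (ygen X θstar ε p i₁ iₙ) (xtest X p i₁ iₙ) {i₁} <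
      effect X (ygen X θstar ε p i₁ iₙ) (xtest X p i₁ iₙ) {iₙ} ∧
    (∀ i, i ≠ i₁ → i ≠ iₙ →
      effect X (ygen X θstar ε p i₁ iₙ) (xtest X p i₁ iₙ) {i} ≤ 0) ∧
    (∀ i : Fin n, effect X (ygen X θstar ε p i₁ iₙ) (xtest X p i₁ iₙ) {i} ≤
      effect X (ygen X θstar ε p i₁ iₙ) (xtest X p i₁ iₙ) {iₙ}) := by
  have hne : i₁ ≠ iₙ := by
    intro h
    rw [h] at hi₁
    omega
  have hP : (0:ℝ) < p + 1 := by linarith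
  have hPne : p + 1 ≠ 0 := ne_of_gt hP
  have hDne : (1 - lev X i₁ i₁) * (1 - lev X iₙ iₙ) - (lev X i₁ iₙ)^2 ≠ 0 := ne_of_gt hD
  set y := ygen X θstar ε p i₁ iₙ with hy
  set xt := xtest X p i₁ iₙ with hxt
  -- residual values
  have hr1 : resid X y i₁ = ε - ε * lev X i₁ i₁ - p * ε * lev X i₁ iₙ := by
    rw [hy, resid_ygen X θstar ε p i₁ iₙ i₁ hne hN, if_pos rfl, lev_symm X iₙ i₁]
  have hrn : resid X y iₙ = p*ε - ε * lev X i₁ iₙ - p * ε * lev X iₙ iₙ := by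
    rw [hy, resid_ygen X θstar ε p i₁ iₙ iₙ hne hN, if_neg (Ne.symm hne), if_pos rfl]
  -- effect closed forms
  have eA1 : effect X y xt {i₁}
      = ((ε - ε*lev X i₁ i₁ - p*ε*lev X i₁ iₙ)/(1 - lev X i₁ i₁))
        * ((lev X i₁ i₁ + p*lev X i₁ iₙ)/(p+1)) := by
    rw [effect_single X y xt i₁ hN (hout i₁) (ne_of_lt h11), hr1, hxt,
      xt_dot_lev X p i₁ iₙ i₁, lev_symm X iₙ i₁]
  have eAn : effect X y xt {iₙ}
      = ((p*ε - ε*lev X i₁ iₙ - p*ε*lev X iₙ iₙ)/(1 - lev X iₙ iₙ))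
        * ((lev X i₁ iₙ + p*lev X iₙ iₙ)/(p+1)) := by
    rw [effect_single X y xt iₙ hN (hout iₙ) (ne_of_lt hnn), hrn, hxt,
      xt_dot_lev X p i₁ iₙ iₙ]
  have eA1n : effect X y xt {i₁, iₙ}
      = (((1 - lev X iₙ iₙ)*(ε - ε*lev X i₁ i₁ - p*ε*lev X i₁ iₙ)
          + lev X i₁ iₙ*(p*ε - ε*lev X i₁ iₙ - p*ε*lev X iₙ iₙ))
          /((1 - lev X i₁ i₁)*(1 - lev X iₙ iₙ) - (lev X i₁ iₙ)^2))
        * ((lev X i₁ i₁ + p*lev X i₁ iₙ)/(p+1))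
      + ((lev X i₁ iₙ*(ε - ε*lev X i₁ i₁ - p*ε*lev X i₁ iₙ)
          + (1 - lev X i₁ i₁)*(p*ε - ε*lev X i₁ iₙ - p*ε*lev X iₙ iₙ))
          /((1 - lev X i₁ i₁)*(1 - lev X iₙ iₙ) - (lev X i₁ iₙ)^2))
        * ((lev X i₁ iₙ + p*lev X iₙ iₙ)/(p+1)) := by
    rw [effect_pair X y xt i₁ iₙ hne hN hout₁ₙ hDne, hr1, hrn, hxt,
      xt_dot_lev X p i₁ iₙ i₁, xt_dot_lev X p i₁ iₙ iₙ, lev_symm X iₙ i₁]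
  rw [eA1] at hA₁
  rw [eAn] at hAₙ
  rw [eA1n, eAn] at hcanc
  have part1 : effect X y xt {i₁} < effect X y xt {iₙ} := by
    rw [eA1, eAn]
    exact keyscalar ε p (lev X i₁ i₁) (lev X iₙ iₙ) (lev X i₁ iₙ) hε hp h11 hnn hD
      hA₁ hAₙ hcanc
  have hAₙ' : 0 < effect X y xt {iₙ} := by rw [eAn]; exact hAₙ
  have part2 : ∀ i, i ≠ i₁ → i ≠ iₙ → effect X y xt {i} ≤ 0 := by
    intro i hi1 hin
    have hri : resid X y i = -(ε * (lev X i₁ i + p * lev X iₙ i)) := by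
      rw [hy, resid_ygen X θstar ε p i₁ iₙ i hne hN, if_neg hi1, if_neg hin]
      ring
    have hhi : 0 < 1 - lev X i i := one_sub_lev_pos X i hN (hout i)
    have heff : effect X y xt {i}
        = -(ε * (lev X i₁ i + p * lev X iₙ i)^2 / ((1 - lev X i i)*(p+1))) := by
      rw [effect_single X y xt i hN (hout i) (by linarith), hri, hxt,
        xt_dot_lev X p i₁ iₙ i]
      field_simp
    rw [heff]
    have : 0 ≤ ε * (lev X i₁ i + p * lev X iₙ i)^2 / ((1 - lev X i i)*(p+1)) := by
      apply div_nonneg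
      · positivity
      · positivity
    linarith
  refine ⟨part1, part2, ?_⟩
  intro i
  by_cases h1 : i = i₁
  · subst h1; exact le_of_lt part1
  · by_cases h2 : i = iₙ
    · subst h2; exact le_refl _
    · exact le_trans (part2 i h1 h2) (le_of_lt hAₙ')
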